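/- Let n ≥ 5 be a prime with 2 a primitive root mod n, and let I = |{(τ,ℓ) : 0 ≤ τ < (n−1)/2, 1 ≤ ℓ ≤ 2^τ, 2^τ − ℓ ≡ 2^{−1} (mod n)}|. Then I is even. -/

import Mathlib

set_option linter.unusedVariables false
set_option linter.unusedSectionVars false
set_option maxHeartbeats 1000000
open Finset


lemma count_residue (n M r : ℕ) (hn : 0 < n) (hr1 : 1 ≤ r) (hrn : r ≤ n) :
    ((Finset.Icc 1 M).filter (fun ℓ => ℓ % n = r % n)).card = (M + n - r) / n := by
  induction M with
  | zero =>
      rw [show Finset.Icc 1 0 = ∅ from rfl, Finset.filter_empty, Finset.card_empty]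
      rw [Nat.div_eq_of_lt (by omega)]
  | succ M ih =>
      have hins : Finset.Icc 1 (M+1) = insert (M+1) (Finset.Icc 1 M) := by
        ext x; simp [Finset.mem_Icc]; omega
      have hdvd : ((M+1) % n = r % n) ↔ n ∣ (M + n - r) + 1 := by
        rw [show (M + n - r) + 1 = (M + 1 + n) - r by omega]
        rw [← Nat.modEq_iff_dvd' (show r ≤ M+1+n by omega)]
        unfold Nat.ModEq
        rw [Nat.add_mod_right]
        exact eq_comm
      rw [hins, Finset.filter_insert]
      have hRHS : (M + 1 + n - r) / n = (M + n - r) / n + if n ∣ (M + n - r) + 1 then 1 else 0 := by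
        rw [show M + 1 + n - r = (M + n - r) + 1 by omega, Nat.succ_div]
      rw [hRHS]
      by_cases hc : (M+1) % n = r % n
      · rw [if_pos hc, Finset.card_insert_of_notMem (by simp), ih, if_pos (hdvd.mp hc)]
      · rw [if_neg hc, ih, if_neg (fun h => hc (hdvd.mpr h)), add_zero]

lemma refl_count (n M : ℕ) [NeZero n] (x : ZMod n) :
    ((Finset.Icc 1 M).filter fun ℓ : ℕ => ((ℓ : ZMod n) = x)).card =
    ((Finset.Icc 1 M).filter fun ℓ : ℕ => ((ℓ : ZMod n) = ((M+1 : ℕ) : ZMod n) - x)).card := by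
  apply Finset.card_nbij' (i := fun ℓ => M + 1 - ℓ) (j := fun ℓ => M + 1 - ℓ)
  · intro ℓ hl
    simp only [Finset.mem_coe, Finset.mem_filter, Finset.mem_Icc] at hl ⊢
    refine ⟨⟨by omega, by omega⟩, ?_⟩
    rw [Nat.cast_sub (by omega), hl.2]
  · intro ℓ hl
    simp only [Finset.mem_coe, Finset.mem_filter, Finset.mem_Icc] at hl ⊢
    refine ⟨⟨by omega, by omega⟩, ?_⟩
    rw [Nat.cast_sub (by omega), hl.2]
    ring
  · intro ℓ hl
    simp only [Finset.mem_coe, Finset.mem_filter, Finset.mem_Icc] at hl ⊢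
    omega
  · intro ℓ hl
    simp only [Finset.mem_coe, Finset.mem_filter, Finset.mem_Icc] at hl ⊢
    omega

lemma Ncount (n : ℕ) (hp : n.Prime) (hn5 : 5 ≤ n) (τ : ℕ) :
    ((Finset.Icc 1 (2^τ)).filter fun ℓ : ℕ =>
      ((ℓ : ZMod n) = (2 : ZMod n)^τ - (2 : ZMod n)⁻¹)).card = (2^τ + (n-3)/2) / n := by
  haveI : Fact n.Prime := ⟨hp⟩
  haveI : NeZero n := ⟨by omega⟩
  have hodd : n % 2 = 1 := Nat.odd_iff.mp (hp.odd_of_ne_two (by omega))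
  set g : ℕ := (n-3)/2 with hg
  have hng : n = 2*g + 3 := by omega
  have h2 : (2 : ZMod n) ≠ 0 := by
    have : ((2:ℕ) : ZMod n) ≠ 0 := by
      rw [Ne, ZMod.natCast_eq_zero_iff]
      intro h
      have := Nat.le_of_dvd (by norm_num) h
      omega
    simpa using this
  rw [refl_count]
  have hclass : ((2^τ+1 : ℕ) : ZMod n) - ((2 : ZMod n)^τ - (2 : ZMod n)⁻¹)
      = ((g+3 : ℕ) : ZMod n) := by
    apply mul_left_cancel₀ h2
    have h1 : ((2:ZMod n)) * ((g+3 : ℕ) : ZMod n) = ((2*(g+3) : ℕ) : ZMod n) := by push_cast; ring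
    rw [h1, show 2*(g+3) = n + 3 by omega]
    push_cast
    rw [ZMod.natCast_self]
    rw [mul_sub, mul_sub, mul_inv_cancel₀ h2]
    ring
  rw [hclass]
  have hpred : ∀ ℓ : ℕ, ((ℓ : ZMod n) = ((g+3 : ℕ) : ZMod n)) ↔ (ℓ % n = (g+3) % n) := by
    intro ℓ
    rw [ZMod.natCast_eq_natCast_iff]
    rfl
  simp only [hpred]
  rw [count_residue n (2^τ) (g+3) (by omega) (by omega) (by omega)]
  obtain ⟨M, hM⟩ : ∃ M, 2^τ = M := ⟨_, rfl⟩
  rw [hM]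
  have harith : M + n - (g+3) = M + g := by omega
  rw [harith]


section facts
variable (n : ℕ) (hp : n.Prime) (hn5 : 5 ≤ n) (hprim : orderOf (2 : ZMod n) = n - 1)

include hp hn5 hprim

lemma L_two_ne : (2 : ZMod n) ≠ 0 := by
  haveI : NeZero n := ⟨by omega⟩
  have : ((2:ℕ) : ZMod n) ≠ 0 := by
    rw [Ne, ZMod.natCast_eq_zero_iff]
    intro h; have := Nat.le_of_dvd (by norm_num) h; omega
  simpa using this

lemma L_neg : (2 : ZMod n)^((n-1)/2) = -1 := by
  haveI : Fact n.Prime := ⟨hp⟩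
  haveI : NeZero n := ⟨by omega⟩
  have hodd : n % 2 = 1 := Nat.odd_iff.mp (hp.odd_of_ne_two (by omega))
  have h2m : (n-1)/2 + (n-1)/2 = n - 1 := by omega
  have hpow : (2 : ZMod n)^((n-1)/2) * (2 : ZMod n)^((n-1)/2) = 1 := by
    rw [← pow_add, h2m, ← hprim, pow_orderOf_eq_one]
  rcases mul_self_eq_one_iff.mp hpow with h | h
  · exfalso
    have hdvd := orderOf_dvd_of_pow_eq_one h
    rw [hprim] at hdvd
    have := Nat.le_of_dvd (by omega) hdvd
    omega
  · exact h

lemma L_inj : ∀ i j : ℕ, i < n - 1 → j < n - 1 → (2 : ZMod n)^i = (2 : ZMod n)^j → i = j := by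
  intro i j hi hj hij
  exact pow_injOn_Iio_orderOf (by rw [hprim]; exact hi) (by rw [hprim]; exact hj) hij

lemma L_surj : ∀ x : ZMod n, x ≠ 0 → ∃ τ, τ < n - 1 ∧ (2 : ZMod n)^τ = x := by
  haveI : Fact n.Prime := ⟨hp⟩
  haveI : NeZero n := ⟨by omega⟩
  intro x hx
  have hinj : Set.InjOn (fun τ : ℕ => (2 : ZMod n)^τ) ↑(Finset.range (n-1)) := by
    intro i hi j hj hij
    simp only [Finset.coe_range, Set.mem_Iio] at hi hj
    exact L_inj n hp hn5 hprim i j hi hj hij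
  set E : Finset (ZMod n) := (Finset.range (n-1)).image (fun τ => (2 : ZMod n)^τ) with hE
  have hcardE : E.card = n - 1 := by
    rw [hE, Finset.card_image_of_injOn hinj, Finset.card_range]
  have hsub : E ⊆ Finset.univ.erase 0 := by
    intro y hy
    rw [hE, Finset.mem_image] at hy
    obtain ⟨τ, _, rfl⟩ := hy
    exact Finset.mem_erase.mpr ⟨pow_ne_zero _ (L_two_ne n hp hn5 hprim), Finset.mem_univ _⟩
  have hcard2 : (Finset.univ.erase (0 : ZMod n)).card = n - 1 := by
    rw [Finset.card_erase_of_mem (Finset.mem_univ _), Finset.card_univ, ZMod.card]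
  have hEeq : E = Finset.univ.erase 0 := Finset.eq_of_subset_of_card_le hsub (by omega)
  have hxE : x ∈ E := by
    rw [hEeq]; exact Finset.mem_erase.mpr ⟨hx, Finset.mem_univ _⟩
  rw [hE, Finset.mem_image] at hxE
  obtain ⟨τ, hτ, hτx⟩ := hxE
  exact ⟨τ, Finset.mem_range.mp hτ, hτx⟩

lemma L_mod8 : n % 8 = 3 ∨ n % 8 = 5 := by
  haveI : Fact n.Prime := ⟨hp⟩
  haveI : NeZero n := ⟨by omega⟩
  have hodd : n % 2 = 1 := Nat.odd_iff.mp (hp.odd_of_ne_two (by omega))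
  by_contra hcon
  have h8 : n % 8 = 1 ∨ n % 8 = 7 := by omega
  have hsq : IsSquare (2 : ZMod n) := (ZMod.exists_sq_eq_two_iff (by omega)).mpr h8
  obtain ⟨y, hy⟩ := hsq
  have hyne : y ≠ 0 := by
    intro h; rw [h, mul_zero] at hy; exact L_two_ne n hp hn5 hprim hy
  have hpow : (2 : ZMod n)^((n-1)/2) = 1 := by
    rw [hy, ← pow_two, ← pow_mul, show 2 * ((n-1)/2) = n - 1 by omega]
    exact ZMod.pow_card_sub_one_eq_one hyne
  have hdvd := orderOf_dvd_of_pow_eq_one hpow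
  rw [hprim] at hdvd
  have := Nat.le_of_dvd (by omega) hdvd
  omega

end facts


lemma L_D_parity (n : ℕ) (hn5 : 5 ≤ n) (hodd : n % 2 = 1) (τ : ℕ) :
    ((2^(τ+1) + (n-3)/2) / n) % 2 =
      (if n+3 ≤ 4*(2^τ % n) ∧ 4*(2^τ % n) ≤ 3*n+2 then 1 else 0) := by
  have hn0 : 0 < n := by omega
  set g : ℕ := (n-3)/2 with hg
  have hng : n = 2*g + 3 := by omega
  set s : ℕ := 2^τ % n with hs
  set q : ℕ := 2^τ / n with hq
  have hsn : s < n := Nat.mod_lt _ hn0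
  have hdm : n * q + s = 2^τ := Nat.div_add_mod (2^τ) n
  have hsplit : 2^(τ+1) + g = n*(2*q) + (2*s + g) := by
    rw [pow_succ, ← hdm]; ring
  rw [hsplit, Nat.mul_add_div hn0, Nat.mul_add_mod 2 q _]
  by_cases hC : n+3 ≤ 4*s ∧ 4*s ≤ 3*n+2
  · rw [if_pos hC]
    have h1 : (2*s+g)/n = 1 := Nat.div_eq_of_lt_le (by omega) (by omega)
    rw [h1]
  · rw [if_neg hC]
    rcases (show 2*s+g < n ∨ 2*n ≤ 2*s+g by omega) with h | h
    · rw [Nat.div_eq_of_lt h]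
    · have h2 : (2*s+g)/n = 2 := Nat.div_eq_of_lt_le (by omega) (by omega)
      rw [h2]


section deps
variable (n : ℕ) (hp : n.Prime) (hn5 : 5 ≤ n) (hprim : orderOf (2 : ZMod n) = n - 1)


include hp hn5 hprim
set_option linter.unusedSectionVars false

lemma L_cast_pow [NeZero n] (τ : ℕ) : ((2^τ % n : ℕ) : ZMod n) = (2 : ZMod n)^τ := by
  rw [ZMod.natCast_mod]; push_cast; rfl

lemma L_cast_neg_one [NeZero n] (a : ℕ) (ha : 1 ≤ a) :
    ((a * n - 1 : ℕ) : ZMod n) = -1 := by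
  have h1 : (1:ℕ) ≤ a * n := by nlinarith
  rw [Nat.cast_sub h1]
  push_cast
  rw [ZMod.natCast_self]
  ring

lemma L_sval : 2^((n-1)/2 - 1) % n = (n-1)/2 := by
  haveI : NeZero n := ⟨by omega⟩
  set m : ℕ := (n-1)/2 with hm
  have hodd : n % 2 = 1 := Nat.odd_iff.mp (hp.odd_of_ne_two (by omega))
  have hm2 : 2 ≤ m := by omega
  set s : ℕ := 2^(m-1) % n with hs
  have hsn : s < n := Nat.mod_lt _ (by omega)
  have key : ((2*s : ℕ) : ZMod n) = ((1 * n - 1 : ℕ) : ZMod n) := by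
    rw [L_cast_neg_one n hp hn5 hprim 1 le_rfl]
    have e1 : ((2*s : ℕ) : ZMod n) = (2:ZMod n)^(m-1+1) := by
      push_cast [hs, ZMod.natCast_mod]
      rw [pow_succ]; ring
    rw [e1, show m-1+1 = m by omega]
    exact L_neg n hp hn5 hprim
  have hmod : (2*s) % n = (1 * n - 1) % n := (ZMod.natCast_eq_natCast_iff _ _ _).mp key
  rw [show (1*n-1) % n = 1*n-1 from Nat.mod_eq_of_lt (by omega)] at hmod
  have hdm := Nat.div_add_mod (2*s) n
  have hj : (2*s)/n < 2 := by
    apply Nat.div_lt_of_lt_mul; omega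
  set j := (2*s)/n with hjj
  interval_cases j <;> omega

lemma L_4s : 4 * (2^((n-1)/2 - 2) % n) = n - 1 ∨ 4 * (2^((n-1)/2 - 2) % n) = 3*n - 1 := by
  haveI : NeZero n := ⟨by omega⟩
  set m : ℕ := (n-1)/2 with hm
  have hodd : n % 2 = 1 := Nat.odd_iff.mp (hp.odd_of_ne_two (by omega))
  have hm2 : 2 ≤ m := by omega
  set s : ℕ := 2^(m-2) % n with hs
  have hsn : s < n := Nat.mod_lt _ (by omega)
  have key : ((4*s : ℕ) : ZMod n) = ((1 * n - 1 : ℕ) : ZMod n) := by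
    rw [L_cast_neg_one n hp hn5 hprim 1 le_rfl]
    have e1 : ((4*s : ℕ) : ZMod n) = (2:ZMod n)^(m-2+2) := by
      push_cast [hs, ZMod.natCast_mod]
      rw [pow_add]; ring
    rw [e1, show m-2+2 = m by omega]
    exact L_neg n hp hn5 hprim
  have hmod : (4*s) % n = (1 * n - 1) % n := (ZMod.natCast_eq_natCast_iff _ _ _).mp key
  rw [show (1*n-1) % n = 1*n-1 from Nat.mod_eq_of_lt (by omega)] at hmod
  have hdm := Nat.div_add_mod (4*s) n
  have hj : (4*s)/n < 4 := by
    apply Nat.div_lt_of_lt_mul; omega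
  set j := (4*s)/n with hjj
  interval_cases j <;> omega

lemma L_match (τ : ℕ) (hτ : τ < (n-1)/2) (hne : τ ≠ (n-1)/2 - 2) :
    ((n+3 ≤ 4*(2^τ % n) ∧ 4*(2^τ % n) ≤ 3*n+2) ↔
     (n+3 ≤ 4*(n - 2^τ % n) ∧ 4*(n - 2^τ % n) ≤ 3*n+2)) := by
  haveI : NeZero n := ⟨by omega⟩
  haveI : Fact n.Prime := ⟨hp⟩
  set m : ℕ := (n-1)/2 with hm
  have hodd : n % 2 = 1 := Nat.odd_iff.mp (hp.odd_of_ne_two (by omega))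
  have hm2 : 2 ≤ m := by omega
  have hmn : 2*m = n - 1 := by omega
  set s : ℕ := 2^τ % n with hs
  have hsn : s < n := Nat.mod_lt _ (by omega)
  have hs1 : 1 ≤ s := by
    rcases Nat.eq_zero_or_pos s with h | h
    · exfalso
      have : ((2^τ % n : ℕ) : ZMod n) = 0 := by rw [← hs, h]; simp
      rw [L_cast_pow n hp hn5 hprim] at this
      exact pow_ne_zero τ (L_two_ne n hp hn5 hprim) this
    · exact h
  have hcast4 : ((4*s : ℕ) : ZMod n) = (2 : ZMod n)^(τ+2) := by
    push_cast [hs, ZMod.natCast_mod]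
    ring
  by_contra hiff
  have hd : 4*s = n-1 ∨ 4*s = n+1 ∨ 4*s = 3*n-1 ∨ 4*s = 3*n+1 := by omega
  have hlt : τ + 2 < n - 1 := by omega
  rcases hd with h | h | h | h
  · -- 4s = n-1 : 2^(τ+2) = -1 = 2^m ⇒ τ = m-2 contra
    have : (2:ZMod n)^(τ+2) = (2:ZMod n)^m := by
      rw [← hcast4, show 4*s = 1*n - 1 by omega, L_cast_neg_one n hp hn5 hprim 1 le_rfl, L_neg n hp hn5 hprim]
    have := L_inj n hp hn5 hprim (τ+2) m hlt (by omega) this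
    omega
  · have : (2:ZMod n)^(τ+2) = (2:ZMod n)^0 := by
      rw [← hcast4, h, pow_zero]
      push_cast
      rw [ZMod.natCast_self]; ring
    have := L_inj n hp hn5 hprim (τ+2) 0 hlt (by omega) this
    omega
  · have : (2:ZMod n)^(τ+2) = (2:ZMod n)^m := by
      rw [← hcast4, show 4*s = 3*n - 1 by omega, L_cast_neg_one n hp hn5 hprim 3 (by omega), L_neg n hp hn5 hprim]
    have := L_inj n hp hn5 hprim (τ+2) m hlt (by omega) this
    omega
  · have : (2:ZMod n)^(τ+2) = (2:ZMod n)^0 := by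
      rw [← hcast4, h, pow_zero]
      push_cast
      rw [ZMod.natCast_self]; ring
    have := L_inj n hp hn5 hprim (τ+2) 0 hlt (by omega) this
    omega

lemma L_sneg (τ : ℕ) : 2^(τ+(n-1)/2) % n = n - 2^τ % n := by
  haveI : NeZero n := ⟨by omega⟩
  haveI : Fact n.Prime := ⟨hp⟩
  have h1 : ((2^(τ+(n-1)/2) : ℕ) : ZMod n) = -(((2^τ : ℕ) : ZMod n)) := by
    push_cast
    rw [pow_add, L_neg n hp hn5 hprim]
    ring
  have h2 : 2^(τ+(n-1)/2) % n = ((2^(τ+(n-1)/2) : ℕ) : ZMod n).val := (ZMod.val_natCast _ _).symm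
  have hne0 : (((2^τ : ℕ) : ZMod n)) ≠ 0 := by
    rw [show (((2^τ : ℕ) : ZMod n)) = (2:ZMod n)^τ by push_cast; rfl]
    exact pow_ne_zero τ (L_two_ne n hp hn5 hprim)
  rw [h2, h1, ZMod.neg_val, if_neg hne0, ZMod.val_natCast]

end deps


section main
variable (n : ℕ) (hp : n.Prime) (hn5 : 5 ≤ n) (hprim : orderOf (2 : ZMod n) = n - 1)

include hp hn5 hprim

set_option linter.unusedSectionVars false


lemma L_K : ((Finset.range (n-1)).filter
      (fun τ => n+3 ≤ 4*(2^τ % n) ∧ 4*(2^τ % n) ≤ 3*n+2)).card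
    = 4*(n/8) + (if n % 8 = 3 then 1 else 3) := by
  haveI : NeZero n := ⟨by omega⟩
  have hbij : ((Finset.range (n-1)).filter
      (fun τ => n+3 ≤ 4*(2^τ % n) ∧ 4*(2^τ % n) ≤ 3*n+2)).card
      = ((Finset.range n).filter (fun v => n+3 ≤ 4*v ∧ 4*v ≤ 3*n+2)).card := by
    apply Finset.card_nbij (i := fun τ => 2^τ % n)
    · intro τ hτ
      simp only [Finset.mem_coe, Finset.mem_filter, Finset.mem_range] at hτ ⊢
      exact ⟨Nat.mod_lt _ (by omega), hτ.2⟩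
    · intro τ₁ h₁ τ₂ h₂ h
      simp only [Finset.coe_filter, Set.mem_setOf_eq, Finset.mem_range] at h₁ h₂
      apply L_inj n hp hn5 hprim τ₁ τ₂ h₁.1 h₂.1
      have := congrArg (fun a : ℕ => (a : ZMod n)) h
      simpa only [ZMod.natCast_mod, Nat.cast_pow, Nat.cast_ofNat] using this
    · intro v hv
      simp only [Finset.coe_filter, Set.mem_setOf_eq, Finset.mem_range] at hv
      have hv1 : 1 ≤ v := by omega
      have hvne : ((v : ℕ) : ZMod n) ≠ 0 := by
        rw [Ne, ZMod.natCast_eq_zero_iff]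
        intro h
        have := Nat.le_of_dvd (by omega) h
        omega
      obtain ⟨τ, hτ, hτv⟩ := L_surj n hp hn5 hprim (v : ZMod n) hvne
      refine ⟨τ, ?_, ?_⟩
      · simp only [Finset.coe_filter, Set.mem_setOf_eq, Finset.mem_range]
        have hmod : 2^τ % n = v := by
          have : ((2^τ % n : ℕ) : ZMod n) = ((v : ℕ) : ZMod n) := by
            rw [ZMod.natCast_mod]
            rw [← hτv]; push_cast; rfl
          have h2 := (ZMod.natCast_eq_natCast_iff _ _ _).mp this
          unfold Nat.ModEq at h2
          rw [Nat.mod_eq_of_lt hv.1, Nat.mod_mod_of_dvd _ dvd_rfl] at h2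
          exact h2
        rw [hmod]
        exact ⟨hτ, hv.2⟩
      · simp only
        have : ((2^τ % n : ℕ) : ZMod n) = ((v : ℕ) : ZMod n) := by
          rw [ZMod.natCast_mod, ← hτv]; push_cast; rfl
        have h2 := (ZMod.natCast_eq_natCast_iff _ _ _).mp this
        unfold Nat.ModEq at h2
        rw [Nat.mod_eq_of_lt hv.1, Nat.mod_mod_of_dvd _ dvd_rfl] at h2
        exact h2
  rw [hbij]
  rcases L_mod8 n hp hn5 hprim with h8 | h8
  · set k := n/8 with hk
    have hn : n = 8*k+3 := by omega
    have : (Finset.range n).filter (fun v => n+3 ≤ 4*v ∧ 4*v ≤ 3*n+2)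
        = Finset.Icc (2*k+2) (6*k+2) := by
      ext v
      simp only [Finset.mem_filter, Finset.mem_range, Finset.mem_Icc]
      omega
    rw [this, Nat.card_Icc, if_pos h8]
    omega
  · set k := n/8 with hk
    have hn : n = 8*k+5 := by omega
    have : (Finset.range n).filter (fun v => n+3 ≤ 4*v ∧ 4*v ≤ 3*n+2)
        = Finset.Icc (2*k+2) (6*k+4) := by
      ext v
      simp only [Finset.mem_filter, Finset.mem_range, Finset.mem_Icc]
      omega
    rw [this, Nat.card_Icc, if_neg (by omega)]
    omega

end main


section main2
variable (n : ℕ) (hp : n.Prime) (hn5 : 5 ≤ n) (hprim : orderOf (2 : ZMod n) = n - 1)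

include hp hn5 hprim
set_option linter.unusedSectionVars false


lemma L_parityA :
    Even (((Finset.range ((n-1)/2 - 1)).filter
      (fun τ => n+3 ≤ 4*(2^τ % n) ∧ 4*(2^τ % n) ≤ 3*n+2)).card) := by
  haveI : NeZero n := ⟨by omega⟩
  have hodd : n % 2 = 1 := Nat.odd_iff.mp (hp.odd_of_ne_two (by omega))
  set m : ℕ := (n-1)/2 with hm
  have hm2 : 2 ≤ m := by omega
  have hmn : 2*m = n - 1 := by omega
  set P : ℕ → Prop := fun τ => n+3 ≤ 4*(2^τ % n) ∧ 4*(2^τ % n) ≤ 3*n+2 with hP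
  set P' : ℕ → Prop := fun τ => n+3 ≤ 4*(n - 2^τ % n) ∧ 4*(n - 2^τ % n) ≤ 3*n+2 with hP'
  set A : ℕ := ((Finset.range m).filter P).card with hA
  set A' : ℕ := ((Finset.range m).filter P').card with hA'
  -- step 1 : the target card is A - 1
  have hPm1 : P (m-1) := by
    rw [hP]
    simp only
    rw [L_sval n hp hn5 hprim]
    omega
  have h1 : ((Finset.range (m-1)).filter P).card + 1 = A := by
    rw [hA, show Finset.range m = insert (m-1) (Finset.range (m-1)) by
      ext x; simp only [Finset.mem_insert, Finset.mem_range]; omega]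
    rw [Finset.filter_insert, if_pos hPm1, Finset.card_insert_of_notMem (by simp)]
  -- step 2 : K = A + A'
  have h2 : ((Finset.range (n-1)).filter P).card = A + A' := by
    have hr : Finset.range (n-1) = Finset.Ico 0 m ∪ Finset.Ico m (2*m) := by
      rw [Finset.Ico_union_Ico_eq_Ico (by omega) (by omega), ← hmn, Finset.range_eq_Ico]
    rw [hr, Finset.filter_union, Finset.card_union_of_disjoint
      (Finset.disjoint_filter_filter (Finset.Ico_disjoint_Ico_consecutive 0 m (2*m)))]
    congr 1
    · rw [hA, Finset.range_eq_Ico]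
    · rw [hA']
      apply Finset.card_nbij' (i := fun τ => τ - m) (j := fun τ => τ + m)
      · intro τ hτ
        simp only [Finset.mem_coe, Finset.mem_filter, Finset.mem_Ico, Finset.mem_range] at hτ ⊢
        obtain ⟨⟨hτ1, hτ2⟩, hτP⟩ := hτ
        refine ⟨by omega, ?_⟩
        rw [hP']
        simp only
        have := L_sneg n hp hn5 hprim (τ - m)
        rw [show τ - m + (n-1)/2 = τ by omega] at this
        rw [← this]
        exact hτP
      · intro τ hτ
        simp only [Finset.mem_coe, Finset.mem_filter, Finset.mem_Ico, Finset.mem_range] at hτ ⊢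
        obtain ⟨hτ1, hτP⟩ := hτ
        refine ⟨⟨by omega, by omega⟩, ?_⟩
        rw [hP]
        simp only
        have := L_sneg n hp hn5 hprim τ
        rw [show τ + (n-1)/2 = τ + m by rw [hm]] at this
        rw [this]
        exact hτP
      · intro τ hτ
        simp only [Finset.mem_coe, Finset.mem_filter, Finset.mem_Ico] at hτ ⊢
        omega
      · intro τ hτ
        simp only [Finset.mem_coe, Finset.mem_filter, Finset.mem_range] at hτ ⊢
        omega
  -- step 3 : exchange at m-2
  have hmem : m - 2 ∈ Finset.range m := by simp; omega
  have h3 : A + (if P' (m-2) then 1 else 0) = A' + (if P (m-2) then 1 else 0) := by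
    have e1 : A = ∑ τ ∈ (Finset.range m).erase (m-2), (if P τ then 1 else 0)
        + (if P (m-2) then 1 else 0) := by
      rw [hA, Finset.card_filter, ← Finset.sum_erase_add _ _ hmem]
    have e2 : A' = ∑ τ ∈ (Finset.range m).erase (m-2), (if P' τ then 1 else 0)
        + (if P' (m-2) then 1 else 0) := by
      rw [hA', Finset.card_filter, ← Finset.sum_erase_add _ _ hmem]
    have e3 : ∑ τ ∈ (Finset.range m).erase (m-2), (if P τ then 1 else 0)
        = ∑ τ ∈ (Finset.range m).erase (m-2), (if P' τ then 1 else 0) := by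
      apply Finset.sum_congr rfl
      intro τ hτ
      simp only [Finset.mem_erase, Finset.mem_range] at hτ
      have hiff := L_match n hp hn5 hprim τ (by omega) (by omega)
      simp only [hP, hP']
      exact if_congr hiff rfl rfl
    omega
  -- step 4 : values at m-2
  have h4s := L_4s n hp hn5 hprim
  rcases L_mod8 n hp hn5 hprim with h8 | h8
  · -- n % 8 = 3 : 4*s = 3n-1, P true, P' false
    have hs4 : 4 * (2^(m - 2) % n) = 3*n - 1 := by
      rcases h4s with h | h
      · exfalso; omega
      · exact h
    have hsle : 2^(m-2) % n < n := Nat.mod_lt _ (by omega)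
    have hPv : P (m-2) := by rw [hP]; simp only; omega
    have hP'v : ¬ P' (m-2) := by rw [hP']; simp only; omega
    rw [if_pos hPv, if_neg hP'v] at h3
    have hK := L_K n hp hn5 hprim
    rw [h2, if_pos h8] at hK
    clear_value A A'
    have hc : ((Finset.range (m-1)).filter P).card = 2*(n/8) := by omega
    rw [hc]
    exact ⟨n/8, by ring⟩
  · have hs4 : 4 * (2^(m - 2) % n) = n - 1 := by
      rcases h4s with h | h
      · exact h
      · exfalso; omega
    have hsle : 2^(m-2) % n < n := Nat.mod_lt _ (by omega)
    have hPv : ¬ P (m-2) := by rw [hP]; simp only; omega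
    have hP'v : P' (m-2) := by rw [hP']; simp only; omega
    rw [if_neg hPv, if_pos hP'v] at h3
    have hK := L_K n hp hn5 hprim
    rw [h2, if_neg (by omega)] at hK
    clear_value A A'
    have hc : ((Finset.range (m-1)).filter P).card = 2*(n/8) := by omega
    rw [hc]
    exact ⟨n/8, by ring⟩

end main2





theorem stmt_12 (n : ℕ) (hn : n.Prime) (hn5 : 5 ≤ n)
    (hprim : orderOf (2 : ZMod n) = n - 1) :
    Even (Nat.card {p : ℕ × ℕ // p.1 < (n - 1) / 2 ∧ 1 ≤ p.2 ∧ p.2 ≤ 2 ^ p.1 ∧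
        (2 : ZMod n) ^ p.1 - (p.2 : ZMod n) = (2 : ZMod n)⁻¹}) := by
  haveI : Fact n.Prime := ⟨hn⟩
  haveI : NeZero n := ⟨by omega⟩
  have hodd : n % 2 = 1 := Nat.odd_iff.mp (hn.odd_of_ne_two (by omega))
  set m : ℕ := (n-1)/2 with hm
  have hm2 : 2 ≤ m := by omega
  set g : ℕ := (n-3)/2 with hg
  set S : Finset ((_ : ℕ) × ℕ) := (Finset.range m).sigma
      (fun τ => (Finset.Icc 1 (2^τ)).filter
        (fun ℓ : ℕ => (ℓ : ZMod n) = (2:ZMod n)^τ - (2:ZMod n)⁻¹)) with hS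
  have hequiv : {p : ℕ × ℕ // p.1 < m ∧ 1 ≤ p.2 ∧ p.2 ≤ 2 ^ p.1 ∧
        (2 : ZMod n) ^ p.1 - (p.2 : ZMod n) = (2 : ZMod n)⁻¹} ≃ {q // q ∈ S} :=
    { toFun := fun x => ⟨⟨x.1.1, x.1.2⟩, by
        obtain ⟨⟨τ, ℓ⟩, h1, h2, h3, h4⟩ := x
        simp only [hS, Finset.mem_sigma, Finset.mem_filter, Finset.mem_Icc, Finset.mem_range]
        exact ⟨h1, ⟨h2, h3⟩, by linear_combination -h4⟩⟩
      invFun := fun x => ⟨(x.1.1, x.1.2), by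
        obtain ⟨⟨τ, ℓ⟩, h⟩ := x
        simp only [hS, Finset.mem_sigma, Finset.mem_filter, Finset.mem_Icc,
          Finset.mem_range] at h
        exact ⟨h.1, h.2.1.1, h.2.1.2, by linear_combination -h.2.2⟩⟩
      left_inv := fun x => rfl
      right_inv := fun x => rfl }
  rw [Nat.card_congr hequiv, Nat.card_eq_finsetCard, hS, Finset.card_sigma]
  have hsum : ∀ τ ∈ Finset.range m, ((Finset.Icc 1 (2^τ)).filter
        (fun ℓ : ℕ => (ℓ : ZMod n) = (2:ZMod n)^τ - (2:ZMod n)⁻¹)).card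
      = (2^τ + g) / n := fun τ _ => Ncount n hn hn5 τ
  rw [Finset.sum_congr rfl hsum]
  -- parity
  rw [Nat.even_iff]
  have hsplit : ∑ τ ∈ Finset.range m, (2^τ + g) / n
      = (∑ τ ∈ Finset.range (m-1), (2^(τ+1) + g) / n) + (2^0 + g) / n := by
    rw [show m = (m-1)+1 by omega]
    exact Finset.sum_range_succ' _ _
  have h20 : (2:ℕ)^0 = 1 := pow_zero 2
  have hD0 : (2^0 + g)/n = 0 := Nat.div_eq_of_lt (by omega)
  have hmodsum : (∑ τ ∈ Finset.range (m-1), (2^(τ+1) + g) / n) % 2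
      = (((Finset.range (m-1)).filter
          (fun τ => n+3 ≤ 4*(2^τ % n) ∧ 4*(2^τ % n) ≤ 3*n+2)).card) % 2 := by
    rw [Finset.card_filter, Finset.sum_nat_mod]
    rw [Finset.sum_congr rfl (fun τ _ => L_D_parity n hn5 hodd τ)]
    -- closed
  have heven := L_parityA n hn hn5 hprim
  rw [Nat.even_iff] at heven
  rw [hsplit, hD0, add_zero, hmodsum]
  rw [← hm] at heven
  exact heven
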